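/- Let Φ be an irreducible reduced crystallographic simply-laced root system with base Δ and highest root θ; let α ∈ Δ be an extreme Heisenberg root with neighbour β. Then every root μ ∈ Φ satisfies ⟨μ,β⟩ + c_α(μ) ≤ 2. (This is the paper's assertion that the maximal eigenvalue on 𝔤 of the element Z := β^∨ + S_α/2 is 2.) -/
import Mathlib


open scoped InnerProductSpace

namespace PaperRS

variable {E : Type*} [NormedAddCommGroup E] [InnerProductSpace ℝ E]

/-- A reduced crystallographic simply-laced root system, normalized so that every root has
squared length `2` (hence `⟪δ, ε⟫` is the Cartan integer `⟨δ, ε^∨⟩`). -/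
structure IsRootSystem (Φ : Set E) : Prop where
  finite : Φ.Finite
  nonzero : (0 : E) ∉ Φ
  span_top : Submodule.span ℝ Φ = ⊤
  norm_two : ∀ α ∈ Φ, ⟪α, α⟫_ℝ = 2
  reduced : ∀ α ∈ Φ, ∀ t : ℝ, t • α ∈ Φ → t = 1 ∨ t = -1
  cartan_int : ∀ α ∈ Φ, ∀ β ∈ Φ, ∃ n : ℤ, ⟪α, β⟫_ℝ = (n : ℝ)
  reflect_mem : ∀ α ∈ Φ, ∀ β ∈ Φ, β - ⟪β, α⟫_ℝ • α ∈ Φ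

/-- Irreducibility: `Φ` is nonempty and cannot be split into two mutually orthogonal parts. -/
def IsIrreducible (Φ : Set E) : Prop :=
  Φ.Nonempty ∧ ∀ Φ₁ Φ₂ : Set E, Φ = Φ₁ ∪ Φ₂ →
    (∀ a ∈ Φ₁, ∀ b ∈ Φ₂, ⟪a, b⟫_ℝ = 0) → Φ₁ = ∅ ∨ Φ₂ = ∅

/-- The reflection in (the hyperplane orthogonal to) a root `α` of squared length `2`. -/
def sRefl (α : E) : Function.End E := fun x => x - ⟪x, α⟫_ℝ • α

/-- The group generated by the reflections in the elements of `S`; since every reflection is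
an involution, the submonoid generated by the reflections coincides with the generated group. -/
def genBy (S : Set E) : Submonoid (Function.End E) :=
  Submonoid.closure (sRefl '' S)

/-- The Weyl group of `Φ`: the group generated by the reflections in all the roots. -/
abbrev WeylGroup (Φ : Set E) : Submonoid (Function.End E) := genBy Φ

/-- A base (set of simple roots) of `Φ`, together with the (unique) integer coefficients
`coeff δ γ` of each root `δ` with respect to the simple roots. -/
structure Base (Φ : Set E) where
  Δ : Finset E
  coeff : E → E → ℤ
  subset : ↑Δ ⊆ Φ
  indep : LinearIndependent ℝ (fun γ : {x : E // x ∈ Δ} => (γ : E))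
  expand : ∀ δ ∈ Φ, δ = ∑ γ ∈ Δ, (coeff δ γ : ℝ) • γ
  sign : ∀ δ ∈ Φ, (∀ γ ∈ Δ, 0 ≤ coeff δ γ) ∨ (∀ γ ∈ Δ, coeff δ γ ≤ 0)

variable {Φ : Set E}

/-- `θ` is the highest root of `Φ` with respect to the base `B`. -/
def IsHighest (B : Base Φ) (θ : E) : Prop :=
  θ ∈ Φ ∧ ∀ δ ∈ Φ, ∀ γ ∈ B.Δ, B.coeff δ γ ≤ B.coeff θ γ

/-- `α` is a Heisenberg simple root: the highest root `θ` has `α`-coefficient `2`, and every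
root other than `±θ` has `α`-coefficient in `{-1, 0, 1}`. -/
def IsHeisenberg (B : Base Φ) (θ α : E) : Prop :=
  B.coeff θ α = 2 ∧
    ∀ δ ∈ Φ, δ ≠ θ → δ ≠ -θ →
      B.coeff δ α = -1 ∨ B.coeff δ α = 0 ∨ B.coeff δ α = 1

/-- `α` is an extreme simple root with (unique) neighbour `β`. -/
def IsExtreme (B : Base Φ) (α β : E) : Prop :=
  β ∈ B.Δ ∧ β ≠ α ∧ ⟪α, β⟫_ℝ ≠ 0 ∧
    ∀ γ ∈ B.Δ, γ ≠ α → ⟪α, γ⟫_ℝ ≠ 0 → γ = β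

/-- `Φ_α`: the roots with `α`-coefficient `1` that are orthogonal to `α`. -/
def PhiSet (B : Base Φ) (α : E) : Set E :=
  {ε ∈ Φ | B.coeff ε α = 1 ∧ ⟪ε, α⟫_ℝ = 0}

/-- `Ψ_α`: the roots `ε` with `α`-coefficient `1` and `⟪ε, α⟫ ≤ 0`. -/
def PsiSet (B : Base Φ) (α : E) : Set E :=
  {ε ∈ Φ | B.coeff ε α = 1 ∧ ⟪ε, α⟫_ℝ ≤ 0}

/-- Uniqueness of the coefficients of a root with respect to the simple roots. -/
lemma coeff_unique (B : Base Φ) {δ : E} (hδ : δ ∈ Φ)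
    (d : E → ℝ) (hd : δ = ∑ γ ∈ B.Δ, d γ • γ) {γ : E} (hγ : γ ∈ B.Δ) :
    d γ = (B.coeff δ γ : ℝ) := by
  have h0 : ∑ i : {x : E // x ∈ B.Δ}, (d (i : E) - (B.coeff δ (i : E) : ℝ)) • (i : E) = 0 := by
    rw [Finset.sum_coe_sort B.Δ (fun x => (d x - (B.coeff δ x : ℝ)) • x)]
    simp only [sub_smul, Finset.sum_sub_distrib]
    rw [← hd, ← B.expand δ hδ, sub_self]
  have h := Fintype.linearIndependent_iff.mp B.indep
      (fun i => d (i : E) - (B.coeff δ (i : E) : ℝ)) h0 ⟨γ, hγ⟩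
  have : d γ - (B.coeff δ γ : ℝ) = 0 := h
  linarith

open Classical in
/-- The coefficients of a simple root. -/
lemma coeff_simple (B : Base Φ) {β γ : E} (hβ : β ∈ B.Δ) (hγ : γ ∈ B.Δ) :
    (B.coeff β γ : ℝ) = if γ = β then 1 else 0 := by
  refine (coeff_unique B (B.subset hβ) (fun x => if x = β then (1 : ℝ) else 0) ?_ hγ).symm
  simp [ite_smul, Finset.sum_ite_eq', hβ]

/-- Cauchy–Schwarz for roots of squared length two. -/
lemma inner_le_two' (hΦ : IsRootSystem Φ) {μ ν : E} (hμ : μ ∈ Φ) (hν : ν ∈ Φ) :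
    ⟪μ, ν⟫_ℝ ≤ 2 ∧ (⟪μ, ν⟫_ℝ = 2 → μ = ν) := by
  have h := real_inner_self_nonneg (x := μ - ν)
  have hexp : ⟪μ - ν, μ - ν⟫_ℝ = 4 - 2 * ⟪μ, ν⟫_ℝ := by
    rw [real_inner_sub_sub_self, hΦ.norm_two μ hμ, hΦ.norm_two ν hν]; ring
  constructor
  · linarith [hexp ▸ h]
  · intro h2
    have h0 : ⟪μ - ν, μ - ν⟫_ℝ = 0 := by rw [hexp, h2]; ring
    have := (inner_self_eq_zero (𝕜 := ℝ)).mp h0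
    exact sub_eq_zero.mp this

/-- For an extreme Heisenberg root `α` with neighbour `β`, every root `μ` satisfies
`⟪μ, β⟫ + c_α(μ) ≤ 2`: the maximal eigenvalue of `Z = β^∨ + S_α/2` on `𝔤` is `2`. -/
theorem Z_eigenvalue_le_two
    (hΦ : IsRootSystem Φ) (hirr : IsIrreducible Φ) (B : Base Φ)
    {θ α β : E} (hθ : IsHighest B θ) (hα : α ∈ B.Δ)
    (hext : IsExtreme B α β) (hH : IsHeisenberg B θ α)
    {μ : E} (hμ : μ ∈ Φ) :
    ⟪μ, β⟫_ℝ + (B.coeff μ α : ℝ) ≤ 2 := by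
  classical
  obtain ⟨hβΔ, hβα, -, -⟩ := hext
  have hβΦ : β ∈ Φ := B.subset hβΔ
  have hθΦ : θ ∈ Φ := hθ.1
  have hcβ : (B.coeff β α : ℝ) = 0 := by
    rw [coeff_simple B hβΔ hα, if_neg (fun h => hβα h.symm)]
  have hcθ : B.coeff θ α = 2 := hH.1
  have hle : B.coeff μ α ≤ 2 := hcθ ▸ hθ.2 μ hμ α hα
  obtain ⟨n, hn⟩ := hΦ.cartan_int μ hμ β hβΦ
  have hCS := inner_le_two' hΦ hμ hβΦ
  have hn2 : n ≤ 2 := by exact_mod_cast hn ▸ hCS.1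
  have hnegθ : -θ ∈ Φ := by
    have := hΦ.reflect_mem θ hθΦ θ hθΦ
    rwa [hΦ.norm_two θ hθΦ, show θ - (2 : ℝ) • θ = -θ by module] at this
  have hdneg : -θ = ∑ γ ∈ B.Δ, (-(B.coeff θ γ : ℝ)) • γ := by
    rw [neg_eq_iff_eq_neg, ← Finset.sum_neg_distrib]
    simp only [neg_smul, neg_neg]
    exact B.expand θ hθΦ
  have hcoeffneg : (B.coeff (-θ) α : ℝ) = -2 := by
    have := (coeff_unique B hnegθ _ hdneg hα).symm
    rw [this]
    rw [show ((B.coeff θ α : ℝ)) = 2 by exact_mod_cast hcθ]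
  have hcoeffnegZ : B.coeff (-θ) α = -2 := by exact_mod_cast hcoeffneg
  rcases eq_or_lt_of_le hle with hc2 | hc1
  · -- coeff μ α = 2, hence μ = θ
    have hμθ : μ = θ := by
      by_contra hne
      by_cases hne' : μ = -θ
      · rw [hne'] at hc2; omega
      · rcases hH.2 μ hμ hne hne' with h | h | h <;> omega
    have hn0 : n ≤ 0 := by
      by_contra hpos
      push_neg at hpos
      interval_cases n
      · -- n = 1 : μ - β is a root with α-coefficient 2, contradiction
        have hδ : μ - β ∈ Φ := by
          have := hΦ.reflect_mem β hβΦ μ hμ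
          rwa [hn, show ((1 : ℤ) : ℝ) = 1 by norm_num, one_smul] at this
        have hdd : μ - β = ∑ γ ∈ B.Δ, ((B.coeff μ γ : ℝ) - if γ = β then 1 else 0) • γ := by
          simp only [sub_smul, Finset.sum_sub_distrib, ← B.expand μ hμ]
          simp [ite_smul, Finset.sum_ite_eq', hβΔ]
        have hcδ := coeff_unique B hδ _ hdd hα
        rw [if_neg (fun h => hβα h.symm), sub_zero] at hcδ
        have hcδ' : (B.coeff (μ - β) α : ℝ) = 2 := by
          rw [← hcδ]; exact_mod_cast hc2
        have hcδZ : B.coeff (μ - β) α = 2 := by exact_mod_cast hcδ'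
        have h1 : μ - β ≠ θ := by
          intro h
          rw [← hμθ] at h
          exact hΦ.nonzero (sub_eq_self.mp h ▸ hβΦ)
        have h2 : μ - β ≠ -θ := by
          intro h
          rw [h] at hcδZ
          omega
        rcases hH.2 _ hδ h1 h2 with h | h | h <;> omega
      · -- n = 2 : μ = β, contradiction
        have hμβ : μ = β := hCS.2 (by rw [hn]; norm_num)
        rw [hμβ] at hc2
        have : B.coeff β α = 0 := by exact_mod_cast hcβ
        omega
    rw [hn, show ((B.coeff μ α : ℝ)) = 2 by exact_mod_cast hc2]
    have : (n : ℝ) ≤ 0 := by exact_mod_cast hn0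
    linarith
  · -- coeff μ α ≤ 1
    have hc1' : B.coeff μ α ≤ 1 := by omega
    by_cases hn2' : n = 2
    · have hμβ : μ = β := hCS.2 (by rw [hn, hn2']; norm_num)
      subst hμβ
      rw [hΦ.norm_two μ hμ, hcβ]
      norm_num
    · have hne1 : n ≤ 1 := by omega
      rw [hn]
      have h1 : (n : ℝ) ≤ 1 := by exact_mod_cast hne1
      have h2 : (B.coeff μ α : ℝ) ≤ 1 := by exact_mod_cast hc1'
      linarith

end PaperRS
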